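/- Let q = 5^α. In the design D = (P, T^G) where T is the image of the projective line over F₅, each point of P lies in exactly r = 5^(α-1) blocks. -/

import Mathlib

open Matrix MulAction Pointwise

abbrev SL2 (F : Type) [Field F] := Matrix.SpecialLinearGroup (Fin 2) F

abbrev PSL2 (F : Type) [Field F] := SL2 F ⧸ Subgroup.center (SL2 F)

/-- Nonzero vectors of `F²`. -/
def Vec (F : Type) [Field F] := {v : Fin 2 → F // v ≠ 0}

/-- Two nonzero vectors are related if they differ by multiplication by a power of `i`. -/
def vrel (F : Type) [Field F] (i : F) (v w : Vec F) : Prop :=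
  ∃ n : ℕ, (w.1 : Fin 2 → F) = i ^ n • v.1

/-- The point set `P = (F² \ {0})/⟨i⟩`. -/
def Pts (F : Type) [Field F] (i : F) := Quot (vrel F i)

/-- The class of a nonzero vector in `P`. -/
def mkPt (F : Type) [Field F] (i : F) (v : Fin 2 → F) (hv : v ≠ 0) : Pts F i :=
  Quot.mk _ ⟨v, hv⟩

lemma vec_fst_ne_zero {F : Type} [Field F] (b : F) : ![(1 : F), b] ≠ 0 := by
  intro h
  simpa using congrFun h 0

lemma vec_snd_ne_zero {F : Type} [Field F] (a : F) : ![a, (1 : F)] ≠ 0 := by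
  intro h
  simpa using congrFun h 1

/-- `SL(2,q)` acts on nonzero vectors. -/
def slVecSMul {F : Type} [Field F] (A : SL2 F) (v : Vec F) : Vec F :=
  ⟨(A : Matrix (Fin 2) (Fin 2) F) *ᵥ v.1, by
    intro h
    apply v.2
    have h2 : ((A⁻¹ : SL2 F) : Matrix (Fin 2) (Fin 2) F) *ᵥ
        ((A : Matrix (Fin 2) (Fin 2) F) *ᵥ v.1) = 0 := by rw [h, Matrix.mulVec_zero]
    rwa [Matrix.mulVec_mulVec, ← Matrix.SpecialLinearGroup.coe_mul, inv_mul_cancel,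
      Matrix.SpecialLinearGroup.coe_one, Matrix.one_mulVec] at h2⟩

instance (F : Type) [Field F] (i : F) : SMul (SL2 F) (Pts F i) :=
  ⟨fun A => Quot.map (slVecSMul A) (by
    rintro v w ⟨n, hn⟩
    exact ⟨n, by simp [slVecSMul, hn, Matrix.mulVec_smul]⟩)⟩

instance (F : Type) [Field F] (i : F) : MulAction (SL2 F) (Pts F i) where
  one_smul p := by
    induction p using Quot.ind with | _ v => ?_
    show Quot.mk _ (slVecSMul 1 v) = Quot.mk _ v
    congr 1
    exact Subtype.ext (by simp only [slVecSMul, Matrix.SpecialLinearGroup.coe_one, Matrix.one_mulVec])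
  mul_smul A B p := by
    induction p using Quot.ind with | _ v => ?_
    show Quot.mk _ (slVecSMul (A * B) v) = Quot.mk _ (slVecSMul A (slVecSMul B v))
    congr 1
    exact Subtype.ext (by simp only [slVecSMul, Matrix.SpecialLinearGroup.coe_mul, Matrix.mulVec_mulVec])

/-- The stabilizer in `PSL(2,q)` of a point of `P`, i.e. the image in the quotient
`PSL(2,q) = SL(2,q)/center` of the stabilizer in `SL(2,q)`. -/
def pslPtStab (F : Type) [Field F] (i : F) (p : Pts F i) : Subgroup (PSL2 F) :=
  (MulAction.stabilizer (SL2 F) p).map (QuotientGroup.mk' (Subgroup.center (SL2 F)))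

/-- The setwise stabilizer in `PSL(2,q)` of a set of points of `P`. -/
def pslSetStab (F : Type) [Field F] (i : F) (s : Set (Pts F i)) : Subgroup (PSL2 F) :=
  (MulAction.stabilizer (SL2 F) s).map (QuotientGroup.mk' (Subgroup.center (SL2 F)))

/-- The basic block (octahedron) `T`. -/
def basicT (F : Type) [Field F] (i : F) : Set (Pts F i) :=
  {mkPt F i ![1, 0] (vec_fst_ne_zero 0), mkPt F i ![0, 1] (vec_snd_ne_zero 0),
   mkPt F i ![1, 1] (vec_fst_ne_zero 1), mkPt F i ![1 + i, 1] (vec_snd_ne_zero (1 + i)),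
   mkPt F i ![i, 1] (vec_snd_ne_zero i), mkPt F i ![1, 1 - i] (vec_fst_ne_zero (1 - i))}

namespace StmtAux

instance fact5 : Fact (Nat.Prime 5) := ⟨by norm_num⟩

def Lv (c : ZMod 5) : Fin 6 → Fin 2 → ZMod 5 :=
  ![![1,0], ![0,1], ![1,1], ![1+c,1], ![c,1], ![1,1-c]]

set_option maxRecDepth 4000 in
lemma zne : ∀ c : ZMod 5, c ^ 2 = -1 → ∀ j, Lv c j ≠ 0 := by decide

set_option maxRecDepth 4000 in
lemma zpow : ∀ c : ZMod 5, c ^ 2 = -1 → ∀ a b : Fin 4, c ^ (a : ℕ) = c ^ (b : ℕ) → a = b := by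
  decide

set_option maxRecDepth 4000 in
lemma zinj : ∀ c : ZMod 5, c ^ 2 = -1 → ∀ j k : Fin 6, ∀ n : Fin 4,
    Lv c k = c ^ (n : ℕ) • Lv c j → j = k := by decide

set_option maxRecDepth 4000 in
lemma zkey : ∀ c : ZMod 5, c ^ 2 = -1 → ∀ w : Fin 2 → ZMod 5, w ≠ 0 →
    ∃ j : Fin 6, ∃ n : Fin 4, w = c ^ (n : ℕ) • Lv c j := by decide

set_option maxRecDepth 10000 in
lemma card_SL2_five : Nat.card (Matrix.SpecialLinearGroup (Fin 2) (ZMod 5)) = 120 := by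
  rw [Nat.card_eq_fintype_card]
  decide

section F
variable {F : Type} [Field F]

/-- cast a `ZMod 5` vector to `F`. -/
def cvec (f : ZMod 5 →+* F) (v : Fin 2 → ZMod 5) : Fin 2 → F := fun k => f (v k)

variable {f : ZMod 5 →+* F}

lemma cvec_inj (hf : Function.Injective f) : Function.Injective (cvec f) :=
  fun _ _ h => funext fun k => hf (congrFun h k)

lemma cvec_zero : cvec f 0 = 0 := funext fun _ => map_zero f

lemma cvec_ne (hf : Function.Injective f) {v : Fin 2 → ZMod 5} (hv : v ≠ 0) : cvec f v ≠ 0 :=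
  fun h => hv (cvec_inj hf (h.trans cvec_zero.symm))

lemma cvec_smul (a : ZMod 5) (v : Fin 2 → ZMod 5) : cvec f (a • v) = f a • cvec f v :=
  funext fun k => by simp [cvec, smul_eq_mul, _root_.map_mul]

lemma cvec_mulVec (A : Matrix (Fin 2) (Fin 2) (ZMod 5)) (v : Fin 2 → ZMod 5) :
    cvec f (A *ᵥ v) = (A.map f) *ᵥ cvec f v := by
  funext k
  simp [cvec, Matrix.mulVec, dotProduct, Fin.sum_univ_two, _root_.map_add,
    _root_.map_mul, Matrix.map_apply]

lemma mulVec_e1 {R : Type} [CommRing R] (M : Matrix (Fin 2) (Fin 2) R) :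
    M *ᵥ ![1,0] = fun k => M k 0 := by
  funext k; simp [Matrix.mulVec, dotProduct, Fin.sum_univ_two]

lemma mulVec_e2 {R : Type} [CommRing R] (M : Matrix (Fin 2) (Fin 2) R) :
    M *ᵥ ![0,1] = fun k => M k 1 := by
  funext k; simp [Matrix.mulVec, dotProduct, Fin.sum_univ_two]

variable {i : F}

lemma vrel_refl (v : Vec F) : vrel F i v v := ⟨0, by simp⟩

lemma vrel_symm (hi4 : i ^ 4 = 1) {v w : Vec F} (h : vrel F i v w) : vrel F i w v := by
  obtain ⟨n, h⟩ := h
  refine ⟨3 * n, ?_⟩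
  rw [h, smul_smul, ← pow_add]
  have h4 : 3 * n + n = 4 * n := by ring
  rw [h4, pow_mul, hi4, one_pow, one_smul]

lemma vrel_trans {u v w : Vec F} (h1 : vrel F i u v) (h2 : vrel F i v w) : vrel F i u w := by
  obtain ⟨n, hn⟩ := h1
  obtain ⟨m, hm⟩ := h2
  exact ⟨m + n, by rw [hm, hn, smul_smul, ← pow_add]⟩

lemma vrel_equivalence (hi4 : i ^ 4 = 1) : Equivalence (vrel F i) :=
  ⟨vrel_refl, vrel_symm hi4, vrel_trans⟩

lemma mk_eq_iff (hi4 : i ^ 4 = 1) {v w : Vec F} :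
    Quot.mk (vrel F i) v = Quot.mk (vrel F i) w ↔ vrel F i v w := by
  rw [Quot.eq]
  exact (vrel_equivalence hi4).eqvGen_iff

lemma mk_congr {v w : Vec F} (h : v.1 = w.1) :
    Quot.mk (vrel F i) v = Quot.mk (vrel F i) w :=
  congrArg _ (Subtype.ext h)

/-- `Quot.mk` as a map into `Pts`. -/
def mkp (i : F) (v : Vec F) : Pts F i := Quot.mk (vrel F i) v

lemma mkp_eq_iff (hi4 : i ^ 4 = 1) {v w : Vec F} :
    mkp i v = mkp i w ↔ vrel F i v w := mk_eq_iff hi4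

lemma mkp_congr {v w : Vec F} (h : v.1 = w.1) : mkp i v = mkp i w :=
  congrArg _ (Subtype.ext h)

lemma mkPt_eq (v : Fin 2 → F) (hv : v ≠ 0) :
    mkPt F i v hv = mkp i ⟨v, hv⟩ := rfl

lemma smul_mkp (A : SL2 F) (v : Vec F) :
    A • mkp i v = mkp i (slVecSMul A v) := rfl

lemma sl_mulVec_ne {K : Type} [Field K] (B : Matrix.SpecialLinearGroup (Fin 2) K)
    {v : Fin 2 → K} (hv : v ≠ 0) : (B : Matrix (Fin 2) (Fin 2) K) *ᵥ v ≠ 0 := by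
  intro h
  apply hv
  have h2 : ((B⁻¹ : Matrix.SpecialLinearGroup (Fin 2) K) : Matrix (Fin 2) (Fin 2) K) *ᵥ
      ((B : Matrix (Fin 2) (Fin 2) K) *ᵥ v) = 0 := by rw [h, Matrix.mulVec_zero]
  rwa [Matrix.mulVec_mulVec, ← Matrix.SpecialLinearGroup.coe_mul, inv_mul_cancel,
    Matrix.SpecialLinearGroup.coe_one, Matrix.one_mulVec] at h2

section c

/-- the six basic vectors in `F`. -/
def ptv (f : ZMod 5 →+* F) {c : ZMod 5} (hf : Function.Injective f) (hc : c ^ 2 = -1)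
    (j : Fin 6) : Vec F :=
  ⟨cvec f (Lv c j), cvec_ne hf (zne c hc j)⟩

/-- the six basic points. -/
def pt (i : F) (f : ZMod 5 →+* F) {c : ZMod 5} (hf : Function.Injective f) (hc : c ^ 2 = -1)
    (j : Fin 6) : Pts F i :=
  mkp i (ptv f hf hc j)

variable {c : ZMod 5}

lemma hi4_of (hif : i = f c) (hc : c ^ 2 = -1) : i ^ 4 = 1 := by
  have h4 : c ^ 4 = 1 := by
    have : c ^ 4 = (c ^ 2) ^ 2 := by ring
    rw [this, hc]; ring
  rw [hif, ← _root_.map_pow, h4, _root_.map_one]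

lemma pt_inj (hif : i = f c) (hf : Function.Injective f) (hc : c ^ 2 = -1) :
    Function.Injective (pt i f hf hc) := by
  intro j k h
  rw [pt, pt, mkp_eq_iff (hi4_of hif hc)] at h
  obtain ⟨n, hn⟩ := h
  simp only [ptv] at hn
  rw [pow_eq_pow_mod n (hi4_of hif hc), hif, ← _root_.map_pow, ← cvec_smul] at hn
  have hzz := cvec_inj hf hn
  exact zinj c hc j k ⟨n % 4, Nat.mod_lt _ (by norm_num)⟩ hzz

lemma mem_range_pt (hif : i = f c) (hf : Function.Injective f) (hc : c ^ 2 = -1)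
    {w : Fin 2 → ZMod 5} (hw : w ≠ 0) (hw' : cvec f w ≠ 0) :
    mkp i ⟨cvec f w, hw'⟩ ∈ Set.range (pt i f hf hc) := by
  obtain ⟨j, n, hn⟩ := zkey c hc w hw
  refine ⟨j, ?_⟩
  rw [pt]
  refine (mkp_eq_iff (i := i) (hi4_of hif hc) (v := ptv f hf hc j) (w := ⟨cvec f w, hw'⟩)).mpr ?_
  refine ⟨(n : ℕ), ?_⟩
  show cvec f w = i ^ (n : ℕ) • (ptv f hf hc j).1
  simp only [ptv]
  rw [hn, cvec_smul, hif, _root_.map_pow]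

lemma Lv0 {c : ZMod 5} : Lv c 0 = ![1, 0] := rfl
lemma Lv1 {c : ZMod 5} : Lv c 1 = ![0, 1] := rfl
lemma Lv2 {c : ZMod 5} : Lv c 2 = ![1, 1] := rfl
lemma Lv3 {c : ZMod 5} : Lv c 3 = ![1 + c, 1] := rfl
lemma Lv4 {c : ZMod 5} : Lv c 4 = ![c, 1] := rfl
lemma Lv5 {c : ZMod 5} : Lv c 5 = ![1, 1 - c] := rfl

lemma basicT_eq (hif : i = f c) (hf : Function.Injective f) (hc : c ^ 2 = -1) :
    basicT F i = Set.range (pt i f hf hc) := by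
  have h0 : mkPt F i ![1, 0] (vec_fst_ne_zero 0) = pt i f hf hc 0 := by
    rw [mkPt_eq, pt]
    exact mkp_congr (by
      funext k; fin_cases k <;>
        simp [ptv, cvec, Lv0, hif, _root_.map_sub, _root_.map_add, _root_.map_one])
  have h1 : mkPt F i ![0, 1] (vec_snd_ne_zero 0) = pt i f hf hc 1 := by
    rw [mkPt_eq, pt]
    exact mkp_congr (by
      funext k; fin_cases k <;>
        simp [ptv, cvec, Lv1, hif, _root_.map_sub, _root_.map_add, _root_.map_one])
  have h2 : mkPt F i ![1, 1] (vec_fst_ne_zero 1) = pt i f hf hc 2 := by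
    rw [mkPt_eq, pt]
    exact mkp_congr (by
      funext k; fin_cases k <;>
        simp [ptv, cvec, Lv2, hif, _root_.map_sub, _root_.map_add, _root_.map_one])
  have h3 : mkPt F i ![1 + i, 1] (vec_snd_ne_zero (1 + i)) = pt i f hf hc 3 := by
    rw [mkPt_eq, pt]
    exact mkp_congr (by
      funext k; fin_cases k <;>
        simp [ptv, cvec, Lv3, hif, _root_.map_sub, _root_.map_add, _root_.map_one])
  have h4 : mkPt F i ![i, 1] (vec_snd_ne_zero i) = pt i f hf hc 4 := by
    rw [mkPt_eq, pt]
    exact mkp_congr (by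
      funext k; fin_cases k <;>
        simp [ptv, cvec, Lv4, hif, _root_.map_sub, _root_.map_add, _root_.map_one])
  have h5 : mkPt F i ![1, 1 - i] (vec_fst_ne_zero (1 - i)) = pt i f hf hc 5 := by
    rw [mkPt_eq, pt]
    exact mkp_congr (by
      funext k; fin_cases k <;>
        simp [ptv, cvec, Lv5, hif, _root_.map_sub, _root_.map_add, _root_.map_one])
  rw [basicT, h0, h1, h2, h3, h4, h5]
  apply Set.eq_of_subset_of_subset
  · intro x hx
    simp only [Set.mem_insert_iff, Set.mem_singleton_iff] at hx
    rcases hx with rfl | rfl | rfl | rfl | rfl | rfl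
    exacts [⟨0, rfl⟩, ⟨1, rfl⟩, ⟨2, rfl⟩, ⟨3, rfl⟩, ⟨4, rfl⟩, ⟨5, rfl⟩]
  · rintro x ⟨j, rfl⟩
    fin_cases j <;> simp

lemma card_T (hif : i = f c) (hf : Function.Injective f) (hc : c ^ 2 = -1) :
    Nat.card ↥(basicT F i) = 6 := by
  rw [basicT_eq hif hf hc,
    Nat.card_congr (Equiv.ofInjective _ (pt_inj hif hf hc)).symm,
    Nat.card_eq_fintype_card, Fintype.card_fin]

lemma exists_smul_eq_pt (x : Pts F i) :
    ∃ A : SL2 F, A • mkPt F i ![1, 0] (vec_fst_ne_zero 0) = x := by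
  induction x using Quot.ind with
  | _ v =>
    show ∃ A : SL2 F, A • mkp i ⟨![1, 0], vec_fst_ne_zero 0⟩ = mkp i v
    by_cases h0 : v.1 0 = 0
    · have h1 : v.1 1 ≠ 0 := by
        intro h1
        exact v.2 (funext fun k => by fin_cases k <;> simp [h0, h1])
      refine ⟨⟨!![0, -(v.1 1)⁻¹; v.1 1, 0], by
        rw [Matrix.det_fin_two_of]; field_simp; simp⟩, ?_⟩
      refine (smul_mkp (i := i) _ _).trans ?_
      refine mkp_congr ?_
      show !![0, -(v.1 1)⁻¹; v.1 1, 0] *ᵥ ![1, 0] = v.1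
      rw [mulVec_e1]
      funext k
      fin_cases k <;> simp [h0]
    · refine ⟨⟨!![v.1 0, 0; v.1 1, (v.1 0)⁻¹], by
        rw [Matrix.det_fin_two_of]; field_simp; simp⟩, ?_⟩
      refine (smul_mkp (i := i) _ _).trans ?_
      refine mkp_congr ?_
      show !![v.1 0, 0; v.1 1, (v.1 0)⁻¹] *ᵥ ![1, 0] = v.1
      rw [mulVec_e1]
      funext k
      fin_cases k <;> simp

lemma card_K [Fintype F] (hif : i = f c) (hf : Function.Injective f) (hc : c ^ 2 = -1) :
    Nat.card {A : SL2 F // A • mkPt F i ![1, 0] (vec_fst_ne_zero 0)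
      = mkPt F i ![1, 0] (vec_fst_ne_zero 0)} = 4 * Fintype.card F := by
  have hi4 := hi4_of hif hc
  have hine : i ≠ 0 := by
    intro h
    rw [h] at hi4
    simp at hi4
  have hcan : ∀ m : ℕ, i ^ (3 * m) * i ^ m = 1 := fun m => by
    rw [← pow_add]
    have h4 : 3 * m + m = 4 * m := by ring
    rw [h4, pow_mul, hi4, one_pow]
  have hcan' : ∀ m : ℕ, i ^ m * i ^ (3 * m) = 1 := fun m => by rw [mul_comm]; exact hcan m
  let e : Fin 4 × F → {A : SL2 F // A • mkPt F i ![1, 0] (vec_fst_ne_zero 0)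
      = mkPt F i ![1, 0] (vec_fst_ne_zero 0)} := fun p =>
    ⟨⟨!![i ^ (p.1 : ℕ), p.2; 0, i ^ (3 * (p.1 : ℕ))], by
        rw [Matrix.det_fin_two_of]
        simp [hcan' (p.1 : ℕ)]⟩, by
      refine (mkp_eq_iff (i := i) hi4 (v := slVecSMul _ ⟨![1, 0], vec_fst_ne_zero 0⟩)
        (w := ⟨![1, 0], vec_fst_ne_zero 0⟩)).mpr ?_
      refine ⟨3 * (p.1 : ℕ), ?_⟩
      show ![1, 0] = i ^ (3 * (p.1 : ℕ)) •
        (!![i ^ (p.1 : ℕ), p.2; 0, i ^ (3 * (p.1 : ℕ))] *ᵥ ![1, 0])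
      rw [mulVec_e1]
      funext k
      fin_cases k <;> simp [hcan (p.1 : ℕ)]⟩
  have hinj : Function.Injective e := by
    intro p q h
    have h1 : (e p).1.1 = (e q).1.1 := by rw [h]
    have h00 := congrFun (congrFun h1 0) 0
    have h01 := congrFun (congrFun h1 0) 1
    simp only [e, Matrix.cons_val', Matrix.cons_val_zero, Matrix.cons_val_one,
      Matrix.head_cons, Matrix.empty_val', Matrix.cons_val_fin_one, Matrix.head_fin_const] at h00 h01
    have hm : p.1 = q.1 := by
      apply zpow c hc
      apply hf
      rw [_root_.map_pow, _root_.map_pow, ← hif]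
      exact h00
    exact Prod.ext_iff.mpr ⟨hm, h01⟩
  have hsurj : Function.Surjective e := by
    rintro ⟨A, hA⟩
    replace hA := (mkp_eq_iff (i := i) hi4 (v := slVecSMul A ⟨![1, 0], vec_fst_ne_zero 0⟩)
      (w := ⟨![1, 0], vec_fst_ne_zero 0⟩)).mp hA
    obtain ⟨n, hn⟩ := hA
    have hcol : (slVecSMul A ⟨![1, 0], vec_fst_ne_zero 0⟩).1
        = fun k => (A : Matrix (Fin 2) (Fin 2) F) k 0 := mulVec_e1 _
    rw [hcol] at hn
    have h0 := congrFun hn 0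
    have h1 := congrFun hn 1
    simp only [Pi.smul_apply, smul_eq_mul, Matrix.cons_val_zero, Matrix.cons_val_one,
      Matrix.head_cons] at h0 h1
    have hA10 : (A : Matrix (Fin 2) (Fin 2) F) 1 0 = 0 := by
      rcases mul_eq_zero.mp h1.symm with h | h
      · exact absurd h (pow_ne_zero _ hine)
      · exact h
    have hnm : (3 * n) % 4 < 4 := Nat.mod_lt _ (by norm_num)
    set m : Fin 4 := ⟨3 * n % 4, hnm⟩ with hm
    have him : i ^ (3 * n) = i ^ (m : ℕ) := pow_eq_pow_mod (3 * n) hi4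
    have hA00 : (A : Matrix (Fin 2) (Fin 2) F) 0 0 = i ^ (m : ℕ) := by
      have h2 : i ^ n * (A : Matrix (Fin 2) (Fin 2) F) 0 0 = i ^ n * i ^ (3 * n) := by
        rw [← h0, mul_comm (i ^ n), hcan n]
      have h3 := mul_left_cancel₀ (pow_ne_zero n hine) h2
      rw [h3, him]
    have hdet := A.2
    rw [Matrix.det_fin_two, hA10, mul_zero, sub_zero, hA00] at hdet
    have hA11 : (A : Matrix (Fin 2) (Fin 2) F) 1 1 = i ^ (3 * (m : ℕ)) := by
      have h2 : i ^ (m : ℕ) * (A : Matrix (Fin 2) (Fin 2) F) 1 1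
          = i ^ (m : ℕ) * i ^ (3 * (m : ℕ)) := by
        rw [hdet, hcan' (m : ℕ)]
      exact mul_left_cancel₀ (pow_ne_zero _ hine) h2
    refine ⟨⟨m, (A : Matrix (Fin 2) (Fin 2) F) 0 1⟩, ?_⟩
    apply Subtype.ext
    apply Subtype.ext
    show !![i ^ (m : ℕ), (A : Matrix (Fin 2) (Fin 2) F) 0 1; 0, i ^ (3 * (m : ℕ))]
      = (A : Matrix (Fin 2) (Fin 2) F)
    funext k l
    fin_cases k <;> fin_cases l <;> simp [hA00, hA10, hA11]
  rw [← Nat.card_eq_of_bijective e ⟨hinj, hsurj⟩]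
  simp [Nat.card_prod, Nat.card_eq_fintype_card]

lemma card_stabT (hif : i = f c) (hf : Function.Injective f) (hc : c ^ 2 = -1) :
    Nat.card {A : SL2 F // A • basicT F i = basicT F i} = 120 := by
  have hi4 := hi4_of hif hc
  have hsub : ∀ B : Matrix.SpecialLinearGroup (Fin 2) (ZMod 5),
      (Matrix.SpecialLinearGroup.map f) B • basicT F i ⊆ basicT F i := by
    intro B x hx
    rw [basicT_eq hif hf hc] at hx ⊢
    obtain ⟨y, ⟨j, rfl⟩, rfl⟩ := Set.mem_smul_set.mp hx
    have hw : (B : Matrix (Fin 2) (Fin 2) (ZMod 5)) *ᵥ Lv c j ≠ 0 :=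
      sl_mulVec_ne B (zne c hc j)
    have heq : (Matrix.SpecialLinearGroup.map f) B • pt i f hf hc j
        = mkp i ⟨cvec f ((B : Matrix (Fin 2) (Fin 2) (ZMod 5)) *ᵥ Lv c j), cvec_ne hf hw⟩ := by
      rw [pt, smul_mkp]
      refine mkp_congr ?_
      show ((Matrix.SpecialLinearGroup.map f) B : Matrix (Fin 2) (Fin 2) F) *ᵥ (ptv f hf hc j).1
        = cvec f ((B : Matrix (Fin 2) (Fin 2) (ZMod 5)) *ᵥ Lv c j)
      rw [cvec_mulVec]
      rfl
    rw [heq]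
    exact mem_range_pt hif hf hc hw (cvec_ne hf hw)
  have hmem : ∀ B : Matrix.SpecialLinearGroup (Fin 2) (ZMod 5),
      (Matrix.SpecialLinearGroup.map f) B • basicT F i = basicT F i := by
    intro B
    refine le_antisymm (hsub B) ?_
    have h2 := hsub B⁻¹
    rw [map_inv] at h2
    have h3 := Set.smul_set_mono (a := (Matrix.SpecialLinearGroup.map f) B) h2
    rwa [smul_inv_smul] at h3
  have hbij : Function.Bijective (fun B : Matrix.SpecialLinearGroup (Fin 2) (ZMod 5) =>
      (⟨(Matrix.SpecialLinearGroup.map f) B, hmem B⟩ :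
        {A : SL2 F // A • basicT F i = basicT F i})) := by
    constructor
    · intro B B' h
      have h1 : ((Matrix.SpecialLinearGroup.map f) B : Matrix (Fin 2) (Fin 2) F)
          = ((Matrix.SpecialLinearGroup.map f) B' : Matrix (Fin 2) (Fin 2) F) := by
        rw [Subtype.ext_iff] at h
        exact congrArg Subtype.val h
      apply Subtype.ext
      funext k l
      apply hf
      exact congrFun (congrFun h1 k) l
    · rintro ⟨A, hA⟩
      -- columns of A are casts
      have hptmem : ∀ j : Fin 6, A • pt i f hf hc j ∈ Set.range (pt i f hf hc) := by
        intro j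
        have hj : pt i f hf hc j ∈ basicT F i := by
          rw [basicT_eq hif hf hc]; exact ⟨j, rfl⟩
        have := Set.smul_mem_smul_set (a := A) hj
        rw [hA, basicT_eq hif hf hc] at this
        exact this
      obtain ⟨j0, hj0⟩ := hptmem 0
      obtain ⟨j1, hj1⟩ := hptmem 1
      rw [pt, pt, smul_mkp, mkp_eq_iff hi4] at hj0 hj1
      obtain ⟨n0, hn0⟩ := hj0
      obtain ⟨n1, hn1⟩ := hj1
      have hL0 : (slVecSMul A (ptv f hf hc 0)).1
          = fun k => (A : Matrix (Fin 2) (Fin 2) F) k 0 := by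
        show (A : Matrix (Fin 2) (Fin 2) F) *ᵥ cvec f (Lv c 0) = _
        have hE : cvec f (Lv c 0) = ![1, 0] := by
          funext k; fin_cases k <;> simp [cvec, Lv0, Lv1]
        rw [hE, mulVec_e1]
      have hL1 : (slVecSMul A (ptv f hf hc 1)).1
          = fun k => (A : Matrix (Fin 2) (Fin 2) F) k 1 := by
        show (A : Matrix (Fin 2) (Fin 2) F) *ᵥ cvec f (Lv c 1) = _
        have hE : cvec f (Lv c 1) = ![0, 1] := by
          funext k; fin_cases k <;> simp [cvec, Lv0, Lv1]
        rw [hE, mulVec_e2]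
      rw [hL0] at hn0
      rw [hL1] at hn1
      simp only [ptv] at hn0 hn1
      rw [pow_eq_pow_mod n0 hi4, hif, ← _root_.map_pow, ← cvec_smul] at hn0
      rw [pow_eq_pow_mod n1 hi4, hif, ← _root_.map_pow, ← cvec_smul] at hn1
      set u0 : Fin 2 → ZMod 5 := c ^ (n0 % 4) • Lv c j0 with hu0
      set u1 : Fin 2 → ZMod 5 := c ^ (n1 % 4) • Lv c j1 with hu1
      let B' : Matrix (Fin 2) (Fin 2) (ZMod 5) := Matrix.of ![![u0 0, u1 0], ![u0 1, u1 1]]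
      have hmapB : B'.map f = (A : Matrix (Fin 2) (Fin 2) F) := by
        funext k l
        fin_cases k <;> fin_cases l
        · exact (congrFun hn0 0).symm
        · exact (congrFun hn1 0).symm
        · exact (congrFun hn0 1).symm
        · exact (congrFun hn1 1).symm
      have hdet : B'.det = 1 := by
        apply hf
        rw [RingHom.map_det, RingHom.mapMatrix_apply, hmapB, A.2, _root_.map_one]
      refine ⟨⟨B', hdet⟩, ?_⟩
      apply Subtype.ext
      apply Subtype.ext
      exact hmapB
  rw [← Nat.card_eq_of_bijective _ hbij]
  exact card_SL2_five

end c
end F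

lemma double_count {G Y : Type} [Group G] [MulAction G Y] (y : Y) (s : Set Y)
    (hs : ∀ z ∈ s, ∃ g : G, g • y = z) :
    Nat.card {g : G // g • y ∈ s} = Nat.card s * Nat.card {g : G // g • y = y} := by
  classical
  have hch : ∀ z : s, ∃ g : G, g • y = z.1 := fun z => hs z.1 z.2
  choose gc hgc using hch
  have key : ∀ (g : G) (hg : g • y ∈ s), ((gc ⟨g • y, hg⟩)⁻¹ * g) • y = y := by
    intro g hg
    rw [← smul_smul, inv_smul_eq_iff, hgc ⟨g • y, hg⟩]
  let ψ : {g : G // g • y ∈ s} → s × {g : G // g • y = y} :=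
    fun gp => ⟨⟨gp.1 • y, gp.2⟩, ⟨(gc ⟨gp.1 • y, gp.2⟩)⁻¹ * gp.1, key gp.1 gp.2⟩⟩
  have hbij : Function.Bijective ψ := by
    constructor
    · rintro ⟨g, hg⟩ ⟨g', hg'⟩ h
      rw [Prod.ext_iff] at h
      obtain ⟨h1, h2⟩ := h
      have h3 : gc ⟨g • y, hg⟩ = gc ⟨g' • y, hg'⟩ := congrArg gc h1
      have h4 : (gc ⟨g • y, hg⟩)⁻¹ * g = (gc ⟨g' • y, hg'⟩)⁻¹ * g' := congrArg Subtype.val h2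
      rw [h3] at h4
      exact Subtype.ext (mul_left_cancel h4)
    · rintro ⟨z, k⟩
      have hgy : ((gc z) * k.1) • y = z.1 := by
        rw [← smul_smul, k.2, hgc]
      have hmem : ((gc z) * k.1) • y ∈ s := by rw [hgy]; exact z.2
      refine ⟨⟨gc z * k.1, hmem⟩, ?_⟩
      have hz : (⟨(gc z * k.1) • y, hmem⟩ : s) = z := Subtype.ext hgy
      refine Prod.ext_iff.mpr ⟨hz, Subtype.ext ?_⟩
      show (gc ⟨(gc z * k.1) • y, hmem⟩)⁻¹ * (gc z * k.1) = k.1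
      rw [congrArg gc hz, inv_mul_cancel_left]
  rw [Nat.card_congr (Equiv.ofBijective ψ hbij), Nat.card_prod]

lemma charP_five {F : Type} [Field F] [Fintype F] {α : ℕ} (hα : 1 ≤ α)
    (hcard : Fintype.card F = 5 ^ α) : CharP F 5 := by
  obtain ⟨n, hp, hc⟩ := FiniteField.card F (ringChar F)
  have hdvd : ringChar F ∣ 5 ^ α := by
    rw [← hcard, hc]
    exact dvd_pow_self _ n.pos.ne'
  have h5 : ringChar F = 5 :=
    (Nat.prime_dvd_prime_iff_eq hp (by norm_num)).mp (hp.dvd_of_dvd_pow hdvd)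
  exact h5 ▸ ringChar.charP F

end StmtAux

/-- For `q = 5^α`, in the design `D = (P, T^G)` each point of `P` lies in exactly
`r = 5^(α-1)` blocks. -/
theorem stmt_14 (α : ℕ) (hα : 1 ≤ α) (F : Type) [Field F] [Fintype F]
    (hcard : Fintype.card F = 5 ^ α) (i : F) (hi : i ^ 2 = -1) :
    ∀ x : Pts F i,
      Nat.card {β : Set (Pts F i) | β ∈ MulAction.orbit (SL2 F) (basicT F i) ∧ x ∈ β} =
        5 ^ (α - 1) := by
  intro x
  haveI : CharP F 5 := StmtAux.charP_five hα hcard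
  set f : ZMod 5 →+* F := ZMod.castHom (dvd_refl 5) F with hfdef
  have hf : Function.Injective f := f.injective
  obtain ⟨c, hc, hif⟩ : ∃ c : ZMod 5, c ^ 2 = -1 ∧ i = f c := by
    have h5 : (5 : F) = 0 := by
      have h := CharP.cast_eq_zero F 5
      exact_mod_cast h
    have hsplit : (i - 2) * (i + 2) = 0 := by
      have hr : (i - 2) * (i + 2) = i ^ 2 - 4 := by ring
      rw [hr, hi]
      linear_combination -h5
    rcases mul_eq_zero.mp hsplit with h | h
    · rw [sub_eq_zero] at h
      exact ⟨2, by decide, h.trans (map_ofNat f 2).symm⟩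
    · refine ⟨-2, by decide, (eq_neg_of_add_eq_zero_left h).trans ?_⟩
      rw [map_neg, map_ofNat]
  have hi4 := StmtAux.hi4_of hif hc
  obtain ⟨g, hg⟩ := StmtAux.exists_smul_eq_pt (i := i) x
  have hredux : Nat.card {β : Set (Pts F i) | β ∈ MulAction.orbit (SL2 F) (basicT F i) ∧ x ∈ β}
      = Nat.card {β : Set (Pts F i) | β ∈ MulAction.orbit (SL2 F) (basicT F i)
          ∧ mkPt F i ![1,0] (vec_fst_ne_zero 0) ∈ β} := by
    apply Nat.card_congr
    refine ⟨fun β => ⟨g⁻¹ • β.1, ?_, ?_⟩, fun β => ⟨g • β.1, ?_, ?_⟩,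
      fun β => Subtype.ext (smul_inv_smul g β.1), fun β => Subtype.ext (inv_smul_smul g β.1)⟩
    · obtain ⟨h, hh⟩ := MulAction.mem_orbit_iff.mp β.2.1
      exact MulAction.mem_orbit_iff.mpr ⟨g⁻¹ * h, by rw [← smul_smul, hh]⟩
    · rw [Set.mem_smul_set_iff_inv_smul_mem, inv_inv, hg]
      exact β.2.2
    · obtain ⟨h, hh⟩ := MulAction.mem_orbit_iff.mp β.2.1
      exact MulAction.mem_orbit_iff.mpr ⟨g * h, by rw [← smul_smul, hh]⟩
    · rw [Set.mem_smul_set_iff_inv_smul_mem, ← hg, inv_smul_smul]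
      exact β.2.2
  rw [hredux]
  have hd1 := StmtAux.double_count (G := SL2 F) (basicT F i)
      {β : Set (Pts F i) | β ∈ MulAction.orbit (SL2 F) (basicT F i)
        ∧ mkPt F i ![1,0] (vec_fst_ne_zero 0) ∈ β}
      (fun z hz => MulAction.mem_orbit_iff.mp hz.1)
  have hd2 := StmtAux.double_count (G := SL2 F) (mkPt F i ![1,0] (vec_fst_ne_zero 0))
      (basicT F i) (fun z _ => StmtAux.exists_smul_eq_pt z)
  have hD : Nat.card {g : SL2 F // g • basicT F i ∈
      {β : Set (Pts F i) | β ∈ MulAction.orbit (SL2 F) (basicT F i)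
        ∧ mkPt F i ![1,0] (vec_fst_ne_zero 0) ∈ β}}
      = Nat.card {g : SL2 F // g • mkPt F i ![1,0] (vec_fst_ne_zero 0) ∈ basicT F i} := by
    apply Nat.card_congr
    refine ⟨fun gp => ⟨gp.1⁻¹, ?_⟩, fun gp => ⟨gp.1⁻¹, ?_⟩,
      fun gp => Subtype.ext (inv_inv _), fun gp => Subtype.ext (inv_inv _)⟩
    · exact Set.mem_smul_set_iff_inv_smul_mem.mp gp.2.2
    · exact ⟨MulAction.mem_orbit_iff.mpr ⟨gp.1⁻¹, rfl⟩,
        Set.mem_smul_set_iff_inv_smul_mem.mpr (by rw [inv_inv]; exact gp.2)⟩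
  rw [hd1, hd2, StmtAux.card_T hif hf hc, StmtAux.card_K hif hf hc,
    StmtAux.card_stabT hif hf hc, hcard] at hD
  have hsplit5 : (5:ℕ) ^ α = 5 ^ (α - 1) * 5 := by
    conv_lhs => rw [show α = (α - 1) + 1 by omega]
    rw [pow_succ]
  rw [hsplit5] at hD
  omega
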